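/- Let λ, τ ∈ ℂ with sinh λ ≠ 0, cosh λ ≠ 0 and cosh λ ≠ 1, and set R = [[cosh λ/(1 − cosh λ), −coth λ], [1/(1 − cosh λ), csch λ]], S₀ = [[e^λ, 0], [0, e^{−λ}]], and T₀ = [[coth λ·e^{−τ/2}, coth λ·e^{τ/2}], [csch λ·sech λ·e^{−τ/2}, coth λ·e^{τ/2}]]. Then R·S'(λ) = S₀·R and R·T(λ,τ) = T₀·R, i.e. conjugation by R carries S'(λ) to the diagonal matrix S₀ and T(λ,τ) to T₀. -/

import Mathlib

open Matrix

/-- `S'(λ) = [[cosh λ, cosh λ − 1], [cosh λ + 1, cosh λ]]` -/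
noncomputable def Smat' (l : ℂ) : Matrix (Fin 2) (Fin 2) ℂ :=
  !![Complex.cosh l, Complex.cosh l - 1; Complex.cosh l + 1, Complex.cosh l]

/-- `T(λ,τ) = [[cosh(τ/2)·coth(λ/2), −sinh(τ/2)], [−sinh(τ/2), cosh(τ/2)·tanh(λ/2)]]` -/
noncomputable def Tmat (l τ : ℂ) : Matrix (Fin 2) (Fin 2) ℂ :=
  !![Complex.cosh (τ/2) * (Complex.cosh (l/2) / Complex.sinh (l/2)), -Complex.sinh (τ/2);
     -Complex.sinh (τ/2), Complex.cosh (τ/2) * (Complex.sinh (l/2) / Complex.cosh (l/2))]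

/-- `R = [[cosh λ/(1 − cosh λ), −coth λ], [1/(1 − cosh λ), csch λ]]` -/
noncomputable def Rmat (l : ℂ) : Matrix (Fin 2) (Fin 2) ℂ :=
  !![Complex.cosh l / (1 - Complex.cosh l), -(Complex.cosh l / Complex.sinh l);
     1 / (1 - Complex.cosh l), 1 / Complex.sinh l]

/-- `S₀ = [[e^λ, 0], [0, e^{−λ}]]` -/
noncomputable def S0mat (l : ℂ) : Matrix (Fin 2) (Fin 2) ℂ :=
  !![Complex.exp l, 0; 0, Complex.exp (-l)]

/-- `T₀ = [[coth λ·e^{−τ/2}, coth λ·e^{τ/2}], [csch λ·sech λ·e^{−τ/2}, coth λ·e^{τ/2}]]` -/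
noncomputable def T0mat (l τ : ℂ) : Matrix (Fin 2) (Fin 2) ℂ :=
  !![(Complex.cosh l / Complex.sinh l) * Complex.exp (-τ/2),
     (Complex.cosh l / Complex.sinh l) * Complex.exp (τ/2);
     (1 / Complex.sinh l) * (1 / Complex.cosh l) * Complex.exp (-τ/2),
     (Complex.cosh l / Complex.sinh l) * Complex.exp (τ/2)]

set_option maxHeartbeats 1600000 in
private lemma conjugation_aux (l τ : ℂ) (h1 : Complex.sinh l ≠ 0) (h2 : Complex.cosh l ≠ 0)
    (h3 : Complex.cosh l ≠ 1) (M N : Matrix (Fin 2) (Fin 2) ℂ)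
    (hMN : (M = Smat' l ∧ N = S0mat l) ∨ (M = Tmat l τ ∧ N = T0mat l τ)) :
    Rmat l * M = N * Rmat l := by
  have h3' : (1:ℂ) - Complex.cosh l ≠ 0 := sub_ne_zero.mpr (Ne.symm h3)
  have hds : Complex.sinh l = 2 * Complex.sinh (l/2) * Complex.cosh (l/2) := by
    conv_lhs => rw [show l = 2*(l/2) from by ring]
    rw [Complex.sinh_two_mul]
  have hdc : Complex.cosh l = 2 * Complex.cosh (l/2)^2 - 1 := by
    conv_lhs => rw [show l = 2*(l/2) from by ring]
    rw [Complex.cosh_two_mul]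
    linear_combination -Complex.cosh_sq_sub_sinh_sq (l/2)
  have hs : Complex.sinh (l/2) ≠ 0 := by
    intro h; apply h1; rw [hds, h]; ring
  have hc : Complex.cosh (l/2) ≠ 0 := by
    intro h; apply h1; rw [hds, h]; ring
  have ha : Complex.exp (l/2) ≠ 0 := Complex.exp_ne_zero _
  have hb : Complex.exp (τ/2) ≠ 0 := Complex.exp_ne_zero _
  have el : Complex.exp l = Complex.exp (l/2) * Complex.exp (l/2) := by
    rw [← Complex.exp_add]; ring_nf
  have enl : Complex.exp (-l) = (Complex.exp (l/2) * Complex.exp (l/2))⁻¹ := by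
    rw [Complex.exp_neg, el]
  have ent : Complex.exp (-τ/2) = (Complex.exp (τ/2))⁻¹ := by
    rw [← Complex.exp_neg]; ring_nf
  rcases hMN with ⟨hM, hN⟩ | ⟨hM, hN⟩ <;> subst hM <;> subst hN <;> ext i j <;>
    fin_cases i <;> fin_cases j
  all_goals
    simp only [Smat', Tmat, Rmat, S0mat, T0mat, Matrix.mul_apply, Fin.sum_univ_two,
      Matrix.cons_val', Matrix.cons_val_zero, Matrix.cons_val_one, Matrix.head_cons,
      Matrix.head_fin_const, Matrix.cons_val_fin_one, Matrix.empty_val', Matrix.of_apply,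
        Fin.zero_eta, Fin.mk_one]
    field_simp
    rw [hds, hdc]
    simp only [ent, Complex.sinh, Complex.cosh, Complex.exp_neg, el]
    set a := Complex.exp (l/2) with hA
    set b := Complex.exp (τ/2) with hB
    clear_value a b
    have ia : a * a⁻¹ = 1 := mul_inv_cancel₀ ha
    have ib : b * b⁻¹ = 1 := mul_inv_cancel₀ hb
  · field_simp
    ring
  · field_simp
    ring
  · field_simp
    ring
  · field_simp
    ring
  · linear_combination ((0:ℂ)) * ia + ((0:ℂ)) * ib
  · field_simp
    ring
  · linear_combination ((0:ℂ)) * ia + ((0:ℂ)) * ib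
  · field_simp
    ring

theorem conjugation_by_R (l τ : ℂ) (h1 : Complex.sinh l ≠ 0) (h2 : Complex.cosh l ≠ 0)
    (h3 : Complex.cosh l ≠ 1) :
    Rmat l * Smat' l = S0mat l * Rmat l ∧ Rmat l * Tmat l τ = T0mat l τ * Rmat l := by
  exact ⟨conjugation_aux l τ h1 h2 h3 _ _ (Or.inl ⟨rfl, rfl⟩),
    conjugation_aux l τ h1 h2 h3 _ _ (Or.inr ⟨rfl, rfl⟩)⟩
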